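/- Let n ≥ 4, let S = k[x_1, …, x_n], and for 1 ≤ i ≤ n−1 set e_i = x_i x_{i+1}^{w_{i+1}}, where w_i ≥ 2 for 2 ≤ i ≤ n−1 and w_n ≥ 1. Let I(P_n) = (e_1, …, e_{n−1}) be the edge ideal of the oriented line graph P_n, and let I_n = (e_i e_j : 1 ≤ i < j ≤ n−1) be the ideal generated by all products of two distinct generators of I(P_n) (i.e. the minimal generators of I(P_n)^2 other than the squares e_i^2 = x_i^2 x_{i+1}^{2w_{i+1}}). Then: (1) (I_n, x_n^{w_n}) = (I_{n−1}, x_n^{w_n}); (2) ((I_n : x_n^{w_n}), x_{n−1}) = (I_{n−2}, x_{n−1}); (3) (I_n : x_{n−1} x_n^{w_n}) = I(P_{n−1}), where I_{n−1} and I_{n−2}, and I(P_{n−1}), are the analogous ideals in the variables x_1, …, x_{n−1} and x_1, …, x_{n−2} respectively. -/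

import Mathlib

open MvPolynomial

/-- `lineEdgeIdeal k n w m` is the edge ideal `I(P_m)` of the vertex-weighted oriented
line graph `P_m` on the first `m` of the variables `x_1, …, x_n` (indexed by `Fin n`,
`x_i` corresponding to the index `i - 1`), generated by the elements
`e_i = x_i x_{i+1}^{w_{i+1}}` for `1 ≤ i ≤ m - 1`. -/
noncomputable def lineEdgeIdeal (k : Type) [Field k] (n : ℕ) (w : Fin n → ℕ) (m : ℕ) :
    Ideal (MvPolynomial (Fin n) k) :=
  Ideal.span {p : MvPolynomial (Fin n) k |
    ∃ i j : Fin n, (j : ℕ) = (i : ℕ) + 1 ∧ (i : ℕ) + 2 ≤ m ∧ p = X i * X j ^ w j}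

/-- `lineSquarefreeIdeal k n w m` is the ideal `I_m` generated by all products
`e_i e_j` of two *distinct* generators of `I(P_m)`, i.e. the minimal generators of
`I(P_m)^2` other than the squares `e_i^2`. -/
noncomputable def lineSquarefreeIdeal (k : Type) [Field k] (n : ℕ) (w : Fin n → ℕ)
    (m : ℕ) : Ideal (MvPolynomial (Fin n) k) :=
  Ideal.span {p : MvPolynomial (Fin n) k |
    ∃ i j i' j' : Fin n, (j : ℕ) = (i : ℕ) + 1 ∧ (j' : ℕ) = (i' : ℕ) + 1 ∧
      (i : ℕ) < (i' : ℕ) ∧ (i' : ℕ) + 2 ≤ m ∧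
      p = (X i * X j ^ w j) * (X i' * X j' ^ w j')}

/-- exponent vector of `e_i = x_i x_{i+1}^{w_{i+1}}` -/
noncomputable def eV {n : ℕ} (w : Fin n → ℕ) (i j : Fin n) : Fin n →₀ ℕ :=
  Finsupp.single i 1 + Finsupp.single j (w j)

def sqSet (n : ℕ) (w : Fin n → ℕ) (m : ℕ) : Set (Fin n →₀ ℕ) :=
  {s | ∃ i j i' j' : Fin n, (j : ℕ) = (i : ℕ) + 1 ∧ (j' : ℕ) = (i' : ℕ) + 1 ∧
      (i : ℕ) < (i' : ℕ) ∧ (i' : ℕ) + 2 ≤ m ∧ s = eV w i j + eV w i' j'}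

def edSet (n : ℕ) (w : Fin n → ℕ) (m : ℕ) : Set (Fin n →₀ ℕ) :=
  {s | ∃ i j : Fin n, (j : ℕ) = (i : ℕ) + 1 ∧ (i : ℕ) + 2 ≤ m ∧ s = eV w i j}

lemma X_mul_X_pow_eq (k : Type) [Field k] {n : ℕ} (w : Fin n → ℕ) (i j : Fin n) :
    (X i * X j ^ w j : MvPolynomial (Fin n) k) = monomial (eV w i j) 1 := by
  rw [← pow_one (X i), X_pow_eq_monomial, X_pow_eq_monomial, monomial_mul, one_mul, eV]

lemma sq_eq (k : Type) [Field k] (n : ℕ) (w : Fin n → ℕ) (m : ℕ) :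
    lineSquarefreeIdeal k n w m
      = Ideal.span ((fun s => monomial s (1 : k)) '' sqSet n w m) := by
  unfold lineSquarefreeIdeal
  congr 1
  ext p
  simp only [Set.mem_setOf_eq, Set.mem_image, sqSet]
  constructor
  · rintro ⟨i, j, i', j', h1, h2, h3, h4, rfl⟩
    exact ⟨eV w i j + eV w i' j', ⟨i, j, i', j', h1, h2, h3, h4, rfl⟩,
      by rw [X_mul_X_pow_eq, X_mul_X_pow_eq, monomial_mul, one_mul]⟩
  · rintro ⟨s, ⟨i, j, i', j', h1, h2, h3, h4, rfl⟩, rfl⟩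
    exact ⟨i, j, i', j', h1, h2, h3, h4,
      by rw [X_mul_X_pow_eq, X_mul_X_pow_eq, monomial_mul, one_mul]⟩

lemma ed_eq (k : Type) [Field k] (n : ℕ) (w : Fin n → ℕ) (m : ℕ) :
    lineEdgeIdeal k n w m
      = Ideal.span ((fun s => monomial s (1 : k)) '' edSet n w m) := by
  unfold lineEdgeIdeal
  congr 1
  ext p
  simp only [Set.mem_setOf_eq, Set.mem_image, edSet]
  constructor
  · rintro ⟨i, j, h1, h2, rfl⟩
    exact ⟨eV w i j, ⟨i, j, h1, h2, rfl⟩, (X_mul_X_pow_eq k w i j).symm⟩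
  · rintro ⟨s, ⟨i, j, h1, h2, rfl⟩, rfl⟩
    exact ⟨i, j, h1, h2, (X_mul_X_pow_eq k w i j).symm⟩

lemma support_mul_monomial {k : Type} [Field k] {n : ℕ}
    (p : MvPolynomial (Fin n) k) (τ : Fin n →₀ ℕ) :
    (p * monomial τ 1).support = p.support.map (addRightEmbedding τ) :=
  AddMonoidAlgebra.support_coeff_mul_single p 1 (by simp) τ

lemma sq_mono (k : Type) [Field k] (n : ℕ) (w : Fin n → ℕ) {m m' : ℕ} (h : m ≤ m') :
    lineSquarefreeIdeal k n w m ≤ lineSquarefreeIdeal k n w m' :=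
  Ideal.span_mono (by
    rintro p ⟨i, j, i', j', h1, h2, h3, h4, rfl⟩
    exact ⟨i, j, i', j', h1, h2, h3, h4.trans h, rfl⟩)

section Comb
variable {n : ℕ} (w : Fin n → ℕ)

lemma P3fwd (hn : 4 ≤ n) {a b i j i' j' : Fin n}
    (ha : (a : ℕ) = n - 2) (hb : (b : ℕ) = n - 1)
    (h1 : (j : ℕ) = (i : ℕ) + 1) (h2 : (j' : ℕ) = (i' : ℕ) + 1)
    (h3 : (i : ℕ) < (i' : ℕ)) (h4 : (i' : ℕ) + 2 ≤ n)
    {u : Fin n →₀ ℕ}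
    (hle : eV w i j + eV w i' j' ≤ u + eV w a b) :
    ∃ t ∈ edSet n w (n - 1), t ≤ u := by
  refine ⟨eV w i j, ⟨i, j, h1, by omega, rfl⟩, ?_⟩
  by_cases hc : (i' : ℕ) = n - 2
  · obtain rfl : i' = a := Fin.ext (by omega)
    obtain rfl : j' = b := Fin.ext (by omega)
    exact le_of_add_le_add_right hle
  · refine Finsupp.le_def.mpr fun c => ?_
    have h := Finsupp.le_def.mp hle c
    simp only [eV, Finsupp.add_apply, Finsupp.single_apply, Fin.ext_iff] at h ⊢
    split_ifs at h ⊢ <;> omega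

lemma P3rev (hn : 4 ≤ n) {a b l l' : Fin n}
    (ha : (a : ℕ) = n - 2) (hb : (b : ℕ) = n - 1)
    (h1 : (l' : ℕ) = (l : ℕ) + 1) (h2 : (l : ℕ) + 2 ≤ n - 1)
    {u : Fin n →₀ ℕ} (ht : eV w l l' ≤ u) :
    ∃ s ∈ sqSet n w n, s ≤ u + eV w a b :=
  ⟨eV w l l' + eV w a b,
    ⟨l, l', a, b, h1, by omega, by omega, by omega, rfl⟩,
    add_le_add_left ht _⟩

lemma P2fwd (hn : 4 ≤ n) (hw2 : ∀ i : Fin n, 1 ≤ (i : ℕ) → (i : ℕ) ≤ n - 2 → 2 ≤ w i)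
    {a b i j i' j' : Fin n}
    (ha : (a : ℕ) = n - 2) (hb : (b : ℕ) = n - 1)
    (h1 : (j : ℕ) = (i : ℕ) + 1) (h2 : (j' : ℕ) = (i' : ℕ) + 1)
    (h3 : (i : ℕ) < (i' : ℕ)) (h4 : (i' : ℕ) + 2 ≤ n)
    {u : Fin n →₀ ℕ}
    (hle : eV w i j + eV w i' j' ≤ u + Finsupp.single b (w b)) :
    ∃ t ∈ sqSet n w (n - 2) ∪ {Finsupp.single a 1}, t ≤ u := by
  by_cases hc : (i' : ℕ) + 2 ≤ n - 2
  · refine ⟨_, Or.inl ⟨i, j, i', j', h1, h2, h3, hc, rfl⟩, Finsupp.le_def.mpr fun c => ?_⟩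
    have h := Finsupp.le_def.mp hle c
    simp only [eV, Finsupp.add_apply, Finsupp.single_apply, Fin.ext_iff] at h ⊢
    split_ifs at h ⊢ <;> omega
  · refine ⟨_, Or.inr rfl, Finsupp.single_le_iff.mpr ?_⟩
    have h := Finsupp.le_def.mp hle a
    by_cases hi : (i' : ℕ) = n - 2
    · simp only [eV, Finsupp.add_apply, Finsupp.single_apply, Fin.ext_iff] at h
      split_ifs at h <;> omega
    · have hj2 : 2 ≤ w j' := hw2 j' (by omega) (by omega)
      simp only [eV, Finsupp.add_apply, Finsupp.single_apply, Fin.ext_iff] at h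
      split_ifs at h <;> omega

lemma P1fwd (hn : 4 ≤ n) {b i j i' j' : Fin n}
    (hb : (b : ℕ) = n - 1)
    (h2 : (j' : ℕ) = (i' : ℕ) + 1)
    (h4 : (i' : ℕ) + 2 ≤ n) (hc : ¬ (i' : ℕ) + 2 ≤ n - 1) :
    Finsupp.single b (w b) ≤ eV w i j + eV w i' j' := by
  obtain rfl : j' = b := Fin.ext (by omega)
  calc Finsupp.single j' (w j') ≤ eV w i' j' := le_add_self
    _ ≤ eV w i j + eV w i' j' := le_add_self

end Comb

/-- **Lemma.** For `n ≥ 4`, with `e_i = x_i x_{i+1}^{w_{i+1}}`, `I(P_m)` the edge ideal of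
the oriented line graph and `I_m = (e_i e_j : 1 ≤ i < j ≤ m - 1)`, where `w_i ≥ 2` for
`2 ≤ i ≤ n - 1` and `w_n ≥ 1`, one has
`(I_n, x_n^{w_n}) = (I_{n-1}, x_n^{w_n})`,
`((I_n : x_n^{w_n}), x_{n-1}) = (I_{n-2}, x_{n-1})` and
`(I_n : x_{n-1} x_n^{w_n}) = I(P_{n-1})`.
(Variables are indexed by `Fin n`, `x_i` corresponding to the index `i - 1`.) -/
theorem lineSquarefreeIdeal_colon_identities
    (k : Type) [Field k] (n : ℕ) (hn : 4 ≤ n)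
    (w : Fin n → ℕ)
    (hw2 : ∀ i : Fin n, 1 ≤ (i : ℕ) → (i : ℕ) ≤ n - 2 → 2 ≤ w i)
    (hwn : 1 ≤ w ⟨n - 1, by omega⟩) :
    lineSquarefreeIdeal k n w n
        ⊔ Ideal.span {(X (⟨n - 1, by omega⟩ : Fin n) : MvPolynomial (Fin n) k)
            ^ w ⟨n - 1, by omega⟩}
      = lineSquarefreeIdeal k n w (n - 1)
          ⊔ Ideal.span {(X (⟨n - 1, by omega⟩ : Fin n) : MvPolynomial (Fin n) k)
              ^ w ⟨n - 1, by omega⟩}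
    ∧ (lineSquarefreeIdeal k n w n).colon
          (Ideal.span {(X (⟨n - 1, by omega⟩ : Fin n) : MvPolynomial (Fin n) k)
              ^ w ⟨n - 1, by omega⟩})
        ⊔ Ideal.span {(X (⟨n - 2, by omega⟩ : Fin n) : MvPolynomial (Fin n) k)}
      = lineSquarefreeIdeal k n w (n - 2)
          ⊔ Ideal.span {(X (⟨n - 2, by omega⟩ : Fin n) : MvPolynomial (Fin n) k)}
    ∧ (lineSquarefreeIdeal k n w n).colon
          (Ideal.span {X (⟨n - 2, by omega⟩ : Fin n)
              * (X (⟨n - 1, by omega⟩ : Fin n) : MvPolynomial (Fin n) k)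
                  ^ w ⟨n - 1, by omega⟩})
      = lineEdgeIdeal k n w (n - 1) := by
  refine ⟨?_, ?_, ?_⟩
  · -- Part (1)
    apply le_antisymm
    · refine sup_le ?_ le_sup_right
      refine Ideal.span_le.mpr ?_
      rintro p ⟨i, j, i', j', h1, h2, h3, h4, rfl⟩
      simp only [SetLike.mem_coe]
      by_cases hc : (i' : ℕ) + 2 ≤ n - 1
      · exact Submodule.mem_sup_left (Ideal.subset_span ⟨i, j, i', j', h1, h2, h3, hc, rfl⟩)
      · refine Submodule.mem_sup_right (Ideal.mem_span_singleton'.mpr ?_)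
        have hj' : j' = ⟨n - 1, by omega⟩ := Fin.ext (show (j' : ℕ) = n - 1 by omega)
        rw [hj']
        exact ⟨X i * X j ^ w j * X i', by ring⟩
    · exact sup_le_sup_right (sq_mono k n w (by omega)) _
  · -- Part (2)
    have hX2 : (X (⟨n - 2, by omega⟩ : Fin n) : MvPolynomial (Fin n) k)
        = monomial (Finsupp.single (⟨n - 2, by omega⟩ : Fin n) 1) 1 := by
      rw [← pow_one (X (⟨n - 2, by omega⟩ : Fin n)), X_pow_eq_monomial]
    have hunion : lineSquarefreeIdeal k n w (n - 2)
          ⊔ Ideal.span {(X (⟨n - 2, by omega⟩ : Fin n) : MvPolynomial (Fin n) k)}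
        = Ideal.span ((fun s => monomial s (1 : k)) ''
            (sqSet n w (n - 2) ∪ {Finsupp.single (⟨n - 2, by omega⟩ : Fin n) 1})) := by
      rw [Set.image_union, Set.image_singleton, Ideal.span_union, sq_eq, hX2]
    apply le_antisymm
    · refine sup_le ?_ le_sup_right
      intro r hr
      rw [Ideal.mem_colon_span_singleton, sq_eq, X_pow_eq_monomial,
        mem_ideal_span_monomial_image, support_mul_monomial] at hr
      rw [hunion, mem_ideal_span_monomial_image]
      intro u hu
      obtain ⟨s, hs, hle⟩ := hr
        (u + Finsupp.single (⟨n - 1, by omega⟩ : Fin n) (w ⟨n - 1, by omega⟩))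
        (Finset.mem_map.mpr ⟨u, hu, rfl⟩)
      obtain ⟨i, j, i', j', h1, h2, h3, h4, rfl⟩ := hs
      exact P2fwd w hn hw2 rfl rfl h1 h2 h3 h4 hle
    · refine sup_le ?_ le_sup_right
      refine le_trans ?_ le_sup_left
      refine le_trans (sq_mono k n w (show n - 2 ≤ n by omega)) ?_
      intro r hr
      rw [Ideal.mem_colon_span_singleton]
      exact Ideal.mul_mem_right _ _ hr
  · -- Part (3)
    ext r
    rw [Ideal.mem_colon_span_singleton, X_mul_X_pow_eq, sq_eq, ed_eq,
      mem_ideal_span_monomial_image, mem_ideal_span_monomial_image, support_mul_monomial]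
    constructor
    · intro H u hu
      obtain ⟨s, hs, hle⟩ := H
        (u + eV w ⟨n - 2, by omega⟩ ⟨n - 1, by omega⟩)
        (Finset.mem_map.mpr ⟨u, hu, rfl⟩)
      obtain ⟨i, j, i', j', h1, h2, h3, h4, rfl⟩ := hs
      exact P3fwd w hn rfl rfl h1 h2 h3 h4 hle
    · intro H m hm
      rw [Finset.mem_map] at hm
      obtain ⟨u, hu, rfl⟩ := hm
      obtain ⟨t, ⟨l, l', h1, h2, rfl⟩, hle⟩ := H u hu
      exact P3rev w hn rfl rfl h1 h2 hle
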